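/- Let U₁ be a real m×r matrix with U₁ᵀU₁ invertible, let U₂ be a real m×s matrix with s ≥ 1 each of whose columns lies in the column space of U₁, and let v ∈ ℝᵐ lie in the column space of U₁. Set P = U₁(U₁ᵀU₁)⁻²U₁ᵀ, G = Iₛ + U₂ᵀPU₂, and g = U₂ᵀPv. Then for any real number c, there exist y₁ ∈ ℝʳ and y₂ ∈ ℝˢ with U₁y₁ + U₂y₂ = v and ‖y₁‖² + ‖y₂‖² = c if and only if vᵀPv − gᵀG⁻¹g ≤ c. -/

import Mathlib

open Matrix

theorem stmt_3 (m r s : ℕ) (hs : 1 ≤ s)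
    (U₁ : Matrix (Fin m) (Fin r) ℝ) (U₂ : Matrix (Fin m) (Fin s) ℝ)
    (v : Fin m → ℝ)
    (hU₁ : IsUnit (U₁ᵀ * U₁))
    (hU₂ : ∀ j : Fin s, ∃ x : Fin r → ℝ, U₁.mulVec x = fun i => U₂ i j)
    (hv : ∃ x : Fin r → ℝ, U₁.mulVec x = v)
    (P : Matrix (Fin m) (Fin m) ℝ) (hP : P = U₁ * ((U₁ᵀ * U₁)⁻¹) ^ 2 * U₁ᵀ)
    (G : Matrix (Fin s) (Fin s) ℝ) (hG : G = 1 + U₂ᵀ * P * U₂)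
    (g : Fin s → ℝ) (hg : g = (U₂ᵀ * P).mulVec v)
    (c : ℝ) :
    (∃ (y₁ : Fin r → ℝ) (y₂ : Fin s → ℝ),
        U₁.mulVec y₁ + U₂.mulVec y₂ = v ∧
        (∑ i, y₁ i ^ 2) + (∑ i, y₂ i ^ 2) = c) ↔
    v ⬝ᵥ P.mulVec v - g ⬝ᵥ G⁻¹.mulVec g ≤ c := by
  -- setup
  set S := U₁ᵀ * U₁ with hS
  have hSd : IsUnit S.det := (Matrix.isUnit_iff_isUnit_det S).mp hU₁
  set A := S⁻¹ * U₁ᵀ with hA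
  have hAU : A * U₁ = 1 := by
    rw [hA, Matrix.mul_assoc, ← hS, Matrix.nonsing_inv_mul S hSd]
  have hScancel : ∀ x : Fin r → ℝ, A.mulVec (U₁.mulVec x) = x := by
    intro x
    rw [Matrix.mulVec_mulVec, hAU, Matrix.one_mulVec]
  have hSsymm : Sᵀ = S := by rw [hS, Matrix.transpose_mul, Matrix.transpose_transpose]
  have hAT : Aᵀ = U₁ * S⁻¹ := by
    rw [hA, Matrix.transpose_mul, Matrix.transpose_transpose,
      Matrix.transpose_nonsing_inv, hSsymm]
  have hP' : P = Aᵀ * A := by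
    rw [hAT, hA, hP, sq]; simp only [Matrix.mul_assoc]
  have hPsymm : Pᵀ = P := by
    rw [hP', Matrix.transpose_mul, Matrix.transpose_transpose]
  -- quadratic form of P
  have hPsm : ∀ x y : Fin m → ℝ, x ⬝ᵥ P.mulVec y = y ⬝ᵥ P.mulVec x := by
    intro x y
    rw [Matrix.dotProduct_mulVec]
    nth_rewrite 1 [← hPsymm]
    rw [Matrix.vecMul_transpose, dotProduct_comm]
  have hPdot : ∀ x : Fin m → ℝ, x ⬝ᵥ P.mulVec x = (A.mulVec x) ⬝ᵥ (A.mulVec x) := by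
    intro x
    rw [hP', ← Matrix.mulVec_mulVec, Matrix.dotProduct_mulVec, Matrix.vecMul_transpose]
  -- W with U₁ * W = U₂, x_v with U₁ x_v = v
  obtain ⟨xv, hxv⟩ := hv
  set W : Matrix (Fin r) (Fin s) ℝ := fun k j => (hU₂ j).choose k with hWdef
  have hW : U₁ * W = U₂ := by
    ext i j
    have := congrFun (hU₂ j).choose_spec i
    simpa [Matrix.mul_apply, Matrix.mulVec, dotProduct] using this
  -- the constraint pins down y₁
  have hconstr : ∀ y₁ y₂, (U₁.mulVec y₁ + U₂.mulVec y₂ = v) ↔ y₁ = xv - W.mulVec y₂ := by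
    intro y₁ y₂
    constructor
    · intro h
      have h2 : U₁.mulVec (y₁ + W.mulVec y₂) = U₁.mulVec xv := by
        rw [Matrix.mulVec_add, Matrix.mulVec_mulVec, hW, hxv, h]
      have := congrArg A.mulVec h2
      rw [hScancel, hScancel] at this
      rw [← this]; abel
    · intro h
      rw [h, Matrix.mulVec_sub, ← hxv, Matrix.mulVec_mulVec, hW]
      abel
  -- quadratic form q
  set q : (Fin s → ℝ) → ℝ := fun y => v ⬝ᵥ P.mulVec v - 2 * (g ⬝ᵥ y) + y ⬝ᵥ G.mulVec y with hq
  have hGsymm : Gᵀ = G := by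
    rw [hG, Matrix.transpose_add, Matrix.transpose_one, Matrix.transpose_mul,
      Matrix.transpose_mul, Matrix.transpose_transpose, hPsymm, Matrix.mul_assoc]
  -- g ⬝ y = v ⬝ P (U₂ y)
  have hgdot : ∀ y : Fin s → ℝ, g ⬝ᵥ y = v ⬝ᵥ P.mulVec (U₂.mulVec y) := by
    intro y
    rw [hg, Matrix.mulVec_mulVec, Matrix.dotProduct_mulVec, ← Matrix.mulVec_transpose,
      Matrix.transpose_mul, hPsymm]
  -- quadratic G form
  have hGdot : ∀ y : Fin s → ℝ, y ⬝ᵥ G.mulVec y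
      = y ⬝ᵥ y + (U₂.mulVec y) ⬝ᵥ P.mulVec (U₂.mulVec y) := by
    intro y
    rw [hG, Matrix.add_mulVec, dotProduct_add, Matrix.one_mulVec]
    congr 1
    rw [← Matrix.mulVec_mulVec, ← Matrix.mulVec_mulVec, Matrix.dotProduct_mulVec,
      Matrix.vecMul_transpose]
  -- sum of squares computation
  have hsum : ∀ y₂ : Fin s → ℝ,
      (∑ i, (xv - W.mulVec y₂) i ^ 2) + (∑ i, y₂ i ^ 2) = q y₂ := by
    intro y₂
    have hd1 : (∑ i, (xv - W.mulVec y₂) i ^ 2)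
        = (xv - W.mulVec y₂) ⬝ᵥ (xv - W.mulVec y₂) := by
      simp [dotProduct, sq]
    have hd2 : (∑ i, y₂ i ^ 2) = y₂ ⬝ᵥ y₂ := by simp [dotProduct, sq]
    have key : xv - W.mulVec y₂ = A.mulVec (v - U₂.mulVec y₂) := by
      rw [Matrix.mulVec_sub, ← hxv, hScancel, ← hW, Matrix.mulVec_mulVec,
        ← Matrix.mul_assoc, hAU, Matrix.one_mul]
    have hPs : (v - U₂.mulVec y₂) ⬝ᵥ P.mulVec (v - U₂.mulVec y₂)
        = v ⬝ᵥ P.mulVec v - 2 * (g ⬝ᵥ y₂) + (U₂.mulVec y₂) ⬝ᵥ P.mulVec (U₂.mulVec y₂) := by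
      have hsy : (U₂.mulVec y₂) ⬝ᵥ P.mulVec v = v ⬝ᵥ P.mulVec (U₂.mulVec y₂) :=
        hPsm _ _
      rw [Matrix.mulVec_sub, dotProduct_sub, sub_dotProduct,
        sub_dotProduct, hsy, hgdot]
      ring
    rw [hd1, hd2, key, ← hPdot, hPs]
    simp only [hq]
    rw [hGdot]
    ring
  -- positive definiteness of G
  have hGge : ∀ y : Fin s → ℝ, y ⬝ᵥ y ≤ y ⬝ᵥ G.mulVec y := by
    intro y
    rw [hGdot, hPdot]
    have : (0:ℝ) ≤ (A.mulVec (U₂.mulVec y)) ⬝ᵥ (A.mulVec (U₂.mulVec y)) :=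
      Finset.sum_nonneg fun i _ => mul_self_nonneg _
    linarith
  have hdotself : ∀ y : Fin s → ℝ, (0:ℝ) ≤ y ⬝ᵥ y :=
    fun y => Finset.sum_nonneg fun i _ => mul_self_nonneg _
  have hGpd : G.PosDef := by
    rw [Matrix.posDef_iff_dotProduct_mulVec]
    constructor
    · show Gᴴ = G
      have hct : Gᴴ = Gᵀ := by
        ext i j
        simp [Matrix.conjTranspose_apply, Matrix.transpose_apply]
      rw [hct, hGsymm]
    · intro x hx
      rw [star_trivial]
      have h1 : (0:ℝ) < x ⬝ᵥ x := by
        rcases lt_or_eq_of_le (hdotself x) with h | h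
        · exact h
        · exact absurd ((dotProduct_self_eq_zero).mp h.symm) hx
      calc (0:ℝ) < x ⬝ᵥ x := h1
        _ ≤ x ⬝ᵥ G.mulVec x := hGge x
  have hGu : IsUnit G.det := (Matrix.isUnit_iff_isUnit_det G).mp hGpd.isUnit
  set z := G⁻¹.mulVec g with hz
  have hGz : G.mulVec z = g := by
    rw [hz, Matrix.mulVec_mulVec, Matrix.mul_nonsing_inv G hGu, Matrix.one_mulVec]
  set μ := v ⬝ᵥ P.mulVec v - g ⬝ᵥ z with hμ
  -- completing the square
  have hcs : ∀ y : Fin s → ℝ, q y = μ + (y - z) ⬝ᵥ G.mulVec (y - z) := by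
    intro y
    have hGsm : ∀ a b : Fin s → ℝ, a ⬝ᵥ G.mulVec b = b ⬝ᵥ G.mulVec a := by
      intro a b
      rw [Matrix.dotProduct_mulVec]
      nth_rewrite 1 [← hGsymm]
      rw [Matrix.vecMul_transpose, dotProduct_comm]
    have hzy : z ⬝ᵥ G.mulVec y = g ⬝ᵥ y := by
      rw [hGsm z y, hGz, dotProduct_comm]
    have hyz : y ⬝ᵥ G.mulVec z = g ⬝ᵥ y := by
      rw [hGz, dotProduct_comm]
    have hzz : z ⬝ᵥ G.mulVec z = g ⬝ᵥ z := by
      rw [hGz, dotProduct_comm]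
    rw [Matrix.mulVec_sub, dotProduct_sub, sub_dotProduct,
      sub_dotProduct, hzy, hyz, hzz, hq, hμ]
    ring
  constructor
  · rintro ⟨y₁, y₂, hc, hsum'⟩
    have hy₁ := (hconstr y₁ y₂).mp hc
    rw [hy₁] at hsum'
    rw [hsum y₂, hcs y₂] at hsum'
    have h0 : (0:ℝ) ≤ (y₂ - z) ⬝ᵥ G.mulVec (y₂ - z) :=
      le_trans (hdotself _) (hGge _)
    rw [hμ, hz] at hsum'
    linarith
  · intro hc
    set e : Fin s → ℝ := Pi.single (⟨0, hs⟩ : Fin s) 1 with he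
    have hee : e ⬝ᵥ e = 1 := by
      rw [he, dotProduct_single, Pi.single_eq_same, mul_one]
    have hd : (0:ℝ) < e ⬝ᵥ G.mulVec e := lt_of_lt_of_le (by rw [hee]; norm_num) (hGge e)
    have hcμ : 0 ≤ c - μ := by
      rw [hμ, hz] at *
      linarith
    set t := Real.sqrt ((c - μ) / (e ⬝ᵥ G.mulVec e)) with ht
    set y₂ := z + t • e with hy₂
    refine ⟨xv - W.mulVec y₂, y₂, (hconstr _ y₂).mpr rfl, ?_⟩
    rw [hsum y₂, hcs y₂, hy₂, add_sub_cancel_left]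
    have hsml : (t • e) ⬝ᵥ G.mulVec (t • e) = t ^ 2 * (e ⬝ᵥ G.mulVec e) := by
      rw [Matrix.mulVec_smul, smul_dotProduct, dotProduct_smul]
      simp [sq]; ring
    rw [hsml, ht, Real.sq_sqrt (div_nonneg hcμ hd.le), div_mul_cancel₀ _ hd.ne']
    rw [hμ, hz] at *
    ring
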